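/- Let Γ be a connected arc-transitive digraph with Property Z whose in-valency and out-valency are both prime numbers. If the pointwise stabilizer G_{(Γ_0)} of the fibre Γ_0 in G = Aut(Γ) is non-trivial, then Γ is highly-arc-transitive. -/

import Mathlib

variable {V : Type*}

/-- The automorphism group of a digraph given by its arc relation `E`. -/
def autGroup (E : V → V → Prop) : Subgroup (Equiv.Perm V) where
  carrier := {g | ∀ u v : V, E u v ↔ E (g u) (g v)}
  one_mem' := by intro u v; simp
  mul_mem' := by
    intro a b ha hb u v
    simpa [Equiv.Perm.mul_apply] using (hb u v).trans (ha (b u) (b v))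
  inv_mem' := by
    intro a ha u v
    simpa using (ha (a⁻¹ u) (a⁻¹ v)).symm

/-- Connectedness of a digraph (in the underlying undirected sense). -/
def DConnected (E : V → V → Prop) : Prop :=
  ∀ u v : V, Relation.ReflTransGen (fun a b => E a b ∨ E b a) u v

/-- `f : Fin (k+1) → V` is a `k`-arc. -/
def IsKArc (E : V → V → Prop) (k : ℕ) (f : Fin (k + 1) → V) : Prop :=
  ∀ i : Fin k, E (f i.castSucc) (f i.succ)

def KArcTransitive (E : V → V → Prop) (k : ℕ) : Prop :=
  ∀ f g : Fin (k + 1) → V, IsKArc E k f → IsKArc E k g →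
    ∃ a ∈ autGroup E, ∀ i, (a : Equiv.Perm V) (f i) = g i

def HighlyArcTransitive (E : V → V → Prop) : Prop :=
  ∀ k : ℕ, KArcTransitive E k

def VertexTransitive (E : V → V → Prop) : Prop :=
  ∀ u v : V, ∃ a ∈ autGroup E, (a : Equiv.Perm V) u = v

def ArcTransitive (E : V → V → Prop) : Prop :=
  ∀ u v x y : V, E u v → E x y →
    ∃ a ∈ autGroup E, (a : Equiv.Perm V) u = x ∧ (a : Equiv.Perm V) v = y

/-- Reachability in the underlying undirected graph avoiding the vertex set `S`. -/
def ReachAvoid (E : V → V → Prop) (S : Set V) : V → V → Prop :=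
  Relation.ReflTransGen (fun a b => (E a b ∨ E b a) ∧ a ∉ S ∧ b ∉ S)

/-- `u` lies in an infinite component of the complement of `S`. -/
def InfComp (E : V → V → Prop) (S : Set V) (u : V) : Prop :=
  u ∉ S ∧ {w | ReachAvoid E S u w}.Infinite

/-- A connected digraph with exactly two ends. -/
def TwoEnded (E : V → V → Prop) : Prop :=
  DConnected E ∧
  (∀ S : Set V, S.Finite → ∀ u v w : V, InfComp E S u → InfComp E S v → InfComp E S w →
    ReachAvoid E S u v ∨ ReachAvoid E S u w ∨ ReachAvoid E S v w) ∧
  ∃ S : Set V, S.Finite ∧ ∃ u v : V, InfComp E S u ∧ InfComp E S v ∧ ¬ ReachAvoid E S u v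

/-- The stabilizer of a vertex `v` in the automorphism group. -/
def vStab (E : V → V → Prop) (v : V) : Subgroup (autGroup E) where
  carrier := {g | (g : Equiv.Perm V) v = v}
  one_mem' := rfl
  mul_mem' := by
    intro a b ha hb
    simp only [Set.mem_setOf_eq] at *
    simp [Subgroup.coe_mul, Equiv.Perm.mul_apply, ha, hb]
  inv_mem' := by
    intro a ha
    simp only [Set.mem_setOf_eq] at *
    have := congrArg (((a : Equiv.Perm V))⁻¹ : Equiv.Perm V) ha
    simpa using this.symm

def outSet (E : V → V → Prop) (v : V) : Set V := {u | E v u}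
def inSet (E : V → V → Prop) (v : V) : Set V := {u | E u v}

/-- The stabilizer of `v` acts quasi-primitively on the set `Ω`. -/
def QuasiPrimitivelyOn (E : V → V → Prop) (v : V) (Ω : Set V) : Prop :=
  (∀ u ∈ Ω, ∀ w ∈ Ω, ∃ g ∈ vStab E v, ((g : autGroup E) : Equiv.Perm V) u = w) ∧
  (∀ N : Subgroup (vStab E v), N.Normal →
    (∀ n ∈ N, ∀ u ∈ Ω, (((n : vStab E v) : autGroup E) : Equiv.Perm V) u = u) ∨
    (∀ u ∈ Ω, ∀ w ∈ Ω, ∃ n ∈ N, (((n : vStab E v) : autGroup E) : Equiv.Perm V) u = w))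

section AuxHAT

variable {V : Type*}

lemma Equiv.Perm.inv_apply_self {α : Type*} (f : Equiv.Perm α) (x : α) : f⁻¹ (f x) = x :=
  Equiv.symm_apply_apply f x

lemma Equiv.Perm.apply_inv_self {α : Type*} (f : Equiv.Perm α) (x : α) : f (f⁻¹ x) = x :=
  Equiv.apply_symm_apply f x

lemma mem_autGroup {E : V → V → Prop} {g : Equiv.Perm V} :
    g ∈ autGroup E ↔ ∀ u v : V, E u v ↔ E (g u) (g v) := Iff.rfl

/-- Every automorphism shifts the `ℤ`-grading by a constant. -/
lemma shift_eq (E : V → V → Prop) (hconn : DConnected E) (φ : V → ℤ)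
    (hhom : ∀ u v : V, E u v → φ v = φ u + 1)
    {a : Equiv.Perm V} (ha : a ∈ autGroup E) (x y : V) :
    φ (a x) - φ x = φ (a y) - φ y := by
  have hc := hconn x y
  induction hc with
  | refl => rfl
  | @tail b c _ hbc ih =>
      rcases hbc with h1 | h1
      · have e1 := hhom _ _ h1
        have e2 := hhom _ _ ((mem_autGroup.mp ha _ _).mp h1)
        omega
      · have e1 := hhom _ _ h1
        have e2 := hhom _ _ ((mem_autGroup.mp ha _ _).mp h1)
        omega

/-- Arc-transitivity plus nonempty out-sets gives vertex-transitivity. -/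
lemma vertex_trans (E : V → V → Prop) (hat : ArcTransitive E)
    (hout_ne : ∀ v : V, (outSet E v).Nonempty) (u v : V) :
    ∃ a ∈ autGroup E, (a : Equiv.Perm V) u = v := by
  obtain ⟨u', hu'⟩ := hout_ne u
  obtain ⟨v', hv'⟩ := hout_ne v
  obtain ⟨a, ha, h1, _⟩ := hat u u' v v' hu' hv'
  exact ⟨a, ha, h1⟩

/-- A "normal" family of automorphisms fixing `v₀` which moves some out-neighbour of `v₀`
acts transitively on `outSet E v₀`, provided the out-valency is prime. -/
lemma orbit_transitive (E : V → V → Prop) (hat : ArcTransitive E)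
    (p : ℕ) (hp : p.Prime) (v₀ : V) (houtp : (outSet E v₀).ncard = p)
    (N : Set (Equiv.Perm V))
    (hsub : ∀ n ∈ N, n ∈ autGroup E)
    (hone : (1 : Equiv.Perm V) ∈ N)
    (hmul : ∀ n₁ ∈ N, ∀ n₂ ∈ N, n₁ * n₂ ∈ N)
    (hinv : ∀ n ∈ N, n⁻¹ ∈ N)
    (hfixv : ∀ n ∈ N, n v₀ = v₀)
    (hnorm : ∀ a : Equiv.Perm V, a ∈ autGroup E → a v₀ = v₀ → ∀ n ∈ N, a * n * a⁻¹ ∈ N)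
    (hmove : ∃ n ∈ N, ∃ u, E v₀ u ∧ n u ≠ u) :
    ∀ u w, E v₀ u → E v₀ w → ∃ n ∈ N, n u = w := by
  classical
  have hfin : (outSet E v₀).Finite :=
    Set.finite_of_ncard_ne_zero (by rw [houtp]; exact hp.pos.ne')
  set st := hfin.toFinset with hst
  have hmem_st : ∀ x, x ∈ st ↔ E v₀ x := by
    intro x; rw [hst, Set.Finite.mem_toFinset]; rfl
  set r : V → V → Prop := fun u w => ∃ n ∈ N, n u = w with hr
  have hr_refl : ∀ u, r u u := fun u => ⟨1, hone, rfl⟩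
  have hr_symm : ∀ {u w}, r u w → r w u := by
    rintro u w ⟨n, hn, rfl⟩
    exact ⟨n⁻¹, hinv n hn, Equiv.Perm.inv_apply_self n u⟩
  have hr_trans : ∀ {u w z}, r u w → r w z → r u z := by
    rintro u w z ⟨n1, h1, rfl⟩ ⟨n2, h2, rfl⟩
    exact ⟨n2 * n1, hmul _ h2 _ h1, by simp [Equiv.Perm.mul_apply]⟩
  have hr_out : ∀ {u w}, E v₀ u → r u w → E v₀ w := by
    rintro u w hu ⟨n, hn, rfl⟩
    have := (mem_autGroup.mp (hsub n hn) v₀ u).mp hu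
    rwa [hfixv n hn] at this
  set fOrb : V → Finset V := fun u => st.filter (fun w => r u w) with hfOrb
  have horb_mem : ∀ u w, w ∈ fOrb u ↔ (E v₀ w ∧ r u w) := by
    intro u w
    rw [hfOrb]; simp only [Finset.mem_filter, hmem_st]
  -- all orbits have the same cardinality
  have hcard : ∀ u w, E v₀ u → E v₀ w → (fOrb u).card = (fOrb w).card := by
    intro u w hu hw
    obtain ⟨a, haaut, hav, hau⟩ := hat v₀ u v₀ w hu hw
    have himg : fOrb w = (fOrb u).image a := by
      ext z
      simp only [Finset.mem_image]
      constructor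
      · intro hz
        obtain ⟨hzE, n, hn, hnz⟩ := (horb_mem w z).mp hz
        have hmemN : a⁻¹ * n * a ∈ N := by
          have h1 : a⁻¹ ∈ autGroup E := (autGroup E).inv_mem haaut
          have h2 : a⁻¹ v₀ = v₀ := a.injective (by rw [Equiv.Perm.apply_inv_self, hav])
          have := hnorm a⁻¹ h1 h2 n hn
          rwa [inv_inv] at this
        refine ⟨a⁻¹ z, ?_, Equiv.Perm.apply_inv_self a z⟩
        rw [horb_mem]
        constructor
        · exact hr_out hu ⟨a⁻¹ * n * a, hmemN, by
            simp only [Equiv.Perm.mul_apply, hau, hnz]⟩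
        · exact ⟨a⁻¹ * n * a, hmemN, by simp only [Equiv.Perm.mul_apply, hau, hnz]⟩
      · rintro ⟨y, hy, rfl⟩
        obtain ⟨hyE, n, hn, hny⟩ := (horb_mem u y).mp hy
        have hmemN : a * n * a⁻¹ ∈ N := hnorm a haaut hav n hn
        rw [horb_mem]
        have hrz : r w (a y) := ⟨a * n * a⁻¹, hmemN, by
          simp only [Equiv.Perm.mul_apply]
          rw [← hau, Equiv.Perm.inv_apply_self, hny]⟩
        exact ⟨hr_out hw hrz, hrz⟩
    rw [himg, Finset.card_image_of_injective _ a.injective]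
  -- fibre decomposition
  have hfiber : st.card = ∑ b ∈ st.image fOrb, (st.filter (fun x => fOrb x = b)).card :=
    Finset.card_eq_sum_card_fiberwise (fun x hx => Finset.mem_image_of_mem _ hx)
  have hkey : ∀ u, E v₀ u → st.filter (fun x => fOrb x = fOrb u) = fOrb u := by
    intro u hu
    ext x
    simp only [Finset.mem_filter, hmem_st, horb_mem]
    constructor
    · rintro ⟨hxE, hfx⟩
      have hx_self : x ∈ fOrb x := (horb_mem x x).mpr ⟨hxE, hr_refl x⟩
      rw [hfx] at hx_self
      exact (horb_mem u x).mp hx_self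
    · rintro ⟨hxE, hux⟩
      refine ⟨hxE, ?_⟩
      ext z
      simp only [horb_mem]
      constructor
      · rintro ⟨hzE, hxz⟩; exact ⟨hzE, hr_trans hux hxz⟩
      · rintro ⟨hzE, huz⟩; exact ⟨hzE, hr_trans (hr_symm hux) huz⟩
  obtain ⟨n₀, hn₀, u₀, hu₀, hmoved⟩ := hmove
  set d := (fOrb u₀).card with hd
  have halld : ∀ b ∈ st.image fOrb, (st.filter (fun x => fOrb x = b)).card = d := by
    rintro b hb
    obtain ⟨u, hu_st, rfl⟩ := Finset.mem_image.mp hb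
    have huE := (hmem_st u).mp hu_st
    rw [hkey u huE]
    exact hcard u u₀ huE hu₀
  have hsum : st.card = (st.image fOrb).card * d := by
    rw [hfiber, Finset.sum_congr rfl halld, Finset.sum_const, smul_eq_mul]
  have hstcard : st.card = p := by
    rw [hst, ← Set.ncard_eq_toFinset_card _ hfin, houtp]
  have hd_dvd : d ∣ p := by
    rw [← hstcard, hsum]; exact dvd_mul_left d _
  have hd_gt : 1 < d := by
    apply Finset.one_lt_card.mpr
    refine ⟨u₀, ?_, n₀ u₀, ?_, ?_⟩
    · exact (horb_mem u₀ u₀).mpr ⟨hu₀, hr_refl u₀⟩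
    · have hru : r u₀ (n₀ u₀) := ⟨n₀, hn₀, rfl⟩
      exact (horb_mem u₀ (n₀ u₀)).mpr ⟨hr_out hu₀ hru, hru⟩
    · exact fun h => hmoved h.symm
  have hdp : d = p := by
    rcases (Nat.Prime.eq_one_or_self_of_dvd hp d hd_dvd) with h | h
    · omega
    · exact h
  have horb_full : fOrb u₀ = st := by
    apply Finset.eq_of_subset_of_card_le (Finset.filter_subset _ _)
    rw [hstcard, ← hdp]
  intro u w hu hw
  have hru : r u₀ u := ((horb_mem u₀ u).mp (horb_full ▸ (hmem_st u).mpr hu)).2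
  have hrw : r u₀ w := ((horb_mem u₀ w).mp (horb_full ▸ (hmem_st w).mpr hw)).2
  exact hr_trans (hr_symm hru) hrw

/-- Main engine: a nontrivial automorphism fixing the lower half `{φ ≤ 0}` pointwise
forces highly-arc-transitivity. -/
lemma half_fix_HAT (E : V → V → Prop) (hconn : DConnected E) (hat : ArcTransitive E)
    (φ : V → ℤ) (hhom : ∀ u v : V, E u v → φ v = φ u + 1)
    (p : ℕ) (hp : p.Prime) (hout : ∀ v : V, (outSet E v).ncard = p)
    (hin_ne : ∀ v : V, (inSet E v).Nonempty)
    (h : Equiv.Perm V) (hmem : h ∈ autGroup E)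
    (hfix : ∀ x, φ x ≤ 0 → h x = x) (hne : h ≠ 1) :
    HighlyArcTransitive E := by
  classical
  have hout_ne : ∀ v : V, (outSet E v).Nonempty := fun v =>
    Set.nonempty_of_ncard_ne_zero (by rw [hout v]; exact hp.pos.ne')
  have hvt : ∀ u v : V, ∃ a ∈ autGroup E, (a : Equiv.Perm V) u = v :=
    vertex_trans E hat hout_ne
  -- find the minimal level moved by h
  have hx0 : ∃ x, h x ≠ x := by
    by_contra h'
    push_neg at h'
    exact hne (Equiv.ext fun x => h' x)
  have hS : ∃ n : ℕ, ∃ x, h x ≠ x ∧ φ x = (n : ℤ) + 1 := by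
    obtain ⟨x₀, hx₀⟩ := hx0
    have hx₀pos : 1 ≤ φ x₀ := by
      by_contra hc
      exact hx₀ (hfix x₀ (by omega))
    exact ⟨(φ x₀ - 1).toNat, x₀, hx₀, by omega⟩
  set M := Nat.find hS with hM
  obtain ⟨x, hxmove, hxlvl⟩ := Nat.find_spec hS
  have hfixM : ∀ y, φ y ≤ (M : ℤ) → h y = y := by
    intro y hy
    by_contra hyne
    have h1y : 1 ≤ φ y := by
      by_contra hc
      exact hyne (hfix y (by omega))
    have hSy : ∃ x, h x ≠ x ∧ φ x = ((φ y - 1).toNat : ℤ) + 1 := ⟨y, hyne, by omega⟩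
    have := Nat.find_min hS (m := (φ y - 1).toNat) (by omega)
    exact this hSy
  obtain ⟨v₀, hv₀⟩ := hin_ne x
  have hv₀lvl : φ v₀ = (M : ℤ) := by
    have := hhom _ _ hv₀
    omega
  -- the normal family N
  set N : Set (Equiv.Perm V) :=
    {n | n ∈ autGroup E ∧ ∀ y, φ y ≤ (M : ℤ) → n y = y} with hN
  have hNsub : ∀ n ∈ N, n ∈ autGroup E := fun n hn => hn.1
  have hNone : (1 : Equiv.Perm V) ∈ N := ⟨(autGroup E).one_mem, fun y _ => rfl⟩
  have hNmul : ∀ n₁ ∈ N, ∀ n₂ ∈ N, n₁ * n₂ ∈ N := by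
    rintro n₁ ⟨h1a, h1f⟩ n₂ ⟨h2a, h2f⟩
    exact ⟨(autGroup E).mul_mem h1a h2a, fun y hy => by
      simp only [Equiv.Perm.mul_apply, h2f y hy, h1f y hy]⟩
  have hNinv : ∀ n ∈ N, n⁻¹ ∈ N := by
    rintro n ⟨ha, hf⟩
    refine ⟨(autGroup E).inv_mem ha, fun y hy => ?_⟩
    have := hf y hy
    rw [← this, Equiv.Perm.inv_apply_self, this]
  have hNfixv : ∀ n ∈ N, n v₀ = v₀ := fun n hn => hn.2 v₀ (le_of_eq hv₀lvl)
  have hNnorm : ∀ a : Equiv.Perm V, a ∈ autGroup E → a v₀ = v₀ →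
      ∀ n ∈ N, a * n * a⁻¹ ∈ N := by
    rintro a haaut hav₀ n ⟨hna, hnf⟩
    have hashift : ∀ z, φ (a z) = φ z := by
      intro z
      have := shift_eq E hconn φ hhom haaut z v₀
      rw [hav₀] at this
      omega
    refine ⟨(autGroup E).mul_mem ((autGroup E).mul_mem haaut hna)
      ((autGroup E).inv_mem haaut), fun y hy => ?_⟩
    have hinvlvl : φ (a⁻¹ y) = φ y := by
      have := hashift (a⁻¹ y)
      rw [Equiv.Perm.apply_inv_self] at this
      omega
    simp only [Equiv.Perm.mul_apply]
    rw [hnf (a⁻¹ y) (by omega), Equiv.Perm.apply_inv_self]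
  have hNmove : ∃ n ∈ N, ∃ u, E v₀ u ∧ n u ≠ u :=
    ⟨h, ⟨hmem, hfixM⟩, x, hv₀, hxmove⟩
  have horb := orbit_transitive E hat p hp v₀ (hout v₀) N hNsub hNone hNmul hNinv
    hNfixv hNnorm hNmove
  -- transfer transitivity to every vertex
  have hT : ∀ v u w : V, E v u → E v w →
      ∃ n ∈ autGroup E, (∀ y, φ y ≤ φ v → n y = y) ∧ n u = w := by
    intro v u w hvu hvw
    obtain ⟨a, haaut, hav⟩ := hvt v₀ v
    have hashift : ∀ z, φ (a z) = φ z + (φ v - (M : ℤ)) := by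
      intro z
      have := shift_eq E hconn φ hhom haaut z v₀
      rw [hav, hv₀lvl] at this
      omega
    have hainv : a⁻¹ ∈ autGroup E := (autGroup E).inv_mem haaut
    have hainvlvl : ∀ z, φ (a⁻¹ z) = φ z - (φ v - (M : ℤ)) := by
      intro z
      have := hashift (a⁻¹ z)
      rw [Equiv.Perm.apply_inv_self] at this
      omega
    have hainv_v : a⁻¹ v = v₀ := by rw [← hav, Equiv.Perm.inv_apply_self]
    have hE1 : E v₀ (a⁻¹ u) := by
      have := (mem_autGroup.mp hainv v u).mp hvu
      rwa [hainv_v] at this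
    have hE2 : E v₀ (a⁻¹ w) := by
      have := (mem_autGroup.mp hainv v w).mp hvw
      rwa [hainv_v] at this
    obtain ⟨n, hnN, hn⟩ := horb (a⁻¹ u) (a⁻¹ w) hE1 hE2
    refine ⟨a * n * a⁻¹, (autGroup E).mul_mem ((autGroup E).mul_mem haaut hnN.1) hainv,
      fun y hy => ?_, ?_⟩
    · simp only [Equiv.Perm.mul_apply]
      rw [hnN.2 (a⁻¹ y) (by have := hainvlvl y; omega), Equiv.Perm.apply_inv_self]
    · simp only [Equiv.Perm.mul_apply]
      rw [hn, Equiv.Perm.apply_inv_self]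
  -- now prove HAT by induction on k
  intro k
  induction k with
  | zero =>
      intro f g _ _
      obtain ⟨a, ha, hav⟩ := hvt (f 0) (g 0)
      exact ⟨a, ha, fun i => by rw [Fin.eq_zero i]; exact hav⟩
  | succ k ih =>
      intro f g hf hg
      set f' : Fin (k + 1) → V := fun i => f i.castSucc with hf'def
      set g' : Fin (k + 1) → V := fun i => g i.castSucc with hg'def
      have hf' : IsKArc E k f' := by
        intro i
        have := hf i.castSucc
        rwa [Fin.succ_castSucc] at this
      have hg' : IsKArc E k g' := by
        intro i
        have := hg i.castSucc
        rwa [Fin.succ_castSucc] at this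
      obtain ⟨a, haaut, hmap⟩ := ih f' g' hf' hg'
      have hstrict : StrictMono (fun i : Fin (k + 2) => φ (g i)) :=
        Fin.strictMono_iff_lt_succ.mpr (fun i => by rw [hhom _ _ (hg i)]; omega)
      set v := g ((Fin.last k).castSucc) with hv
      have hEfa : E (f ((Fin.last k).castSucc)) (f (Fin.last (k + 1))) := by
        have := hf (Fin.last k)
        rwa [Fin.succ_last] at this
      have hEgv : E v (g (Fin.last (k + 1))) := by
        have := hg (Fin.last k)
        rwa [Fin.succ_last] at this
      have hEau : E v (a (f (Fin.last (k + 1)))) := by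
        have h1 := (mem_autGroup.mp haaut _ _).mp hEfa
        have h2 : a (f ((Fin.last k).castSucc)) = v := hmap (Fin.last k)
        rwa [h2] at h1
      obtain ⟨n, hnaut, hnfix, hnu⟩ := hT v _ _ hEau hEgv
      refine ⟨n * a, (autGroup E).mul_mem hnaut haaut, fun i => ?_⟩
      rcases Fin.eq_castSucc_or_eq_last i with ⟨j, rfl⟩ | rfl
      · have hle : φ (g j.castSucc) ≤ φ v := by
          apply hstrict.monotone
          exact Fin.castSucc_le_castSucc_iff.mpr (Fin.le_last j)
        simp only [Equiv.Perm.mul_apply]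
        rw [hmap j, hnfix _ hle]
      · simp only [Equiv.Perm.mul_apply]
        exact hnu

lemma autGroup_flip (E : V → V → Prop) :
    autGroup (fun u v => E v u) = autGroup E := by
  ext g
  constructor
  · intro hg
    exact fun u v => hg v u
  · intro hg
    exact fun u v => hg v u

lemma HAT_flip (E : V → V → Prop)
    (H : HighlyArcTransitive (fun u v => E v u)) : HighlyArcTransitive E := by
  intro k f g hf hg
  have hrevarc : ∀ q : Fin (k + 1) → V, IsKArc E k q →
      IsKArc (fun u v => E v u) k (q ∘ Fin.rev) := by
    intro q hq i
    show E (q (Fin.rev i.succ)) (q (Fin.rev i.castSucc))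
    rw [Fin.rev_succ, Fin.rev_castSucc]
    exact hq i.rev
  obtain ⟨a, ha, hmap⟩ := H k (f ∘ Fin.rev) (g ∘ Fin.rev) (hrevarc f hf) (hrevarc g hg)
  rw [autGroup_flip] at ha
  refine ⟨a, ha, fun i => ?_⟩
  have := hmap i.rev
  simpa [Fin.rev_rev] using this

end AuxHAT

/-- Let `Γ` be a connected arc-transitive digraph with Property Z whose
in- and out-valencies are both prime.  If the pointwise stabilizer of the fibre `Γ₀` is
non-trivial, then `Γ` is highly-arc-transitive. -/
theorem highly_arc_transitive_of_prime_valencies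
    {V : Type*} (E : V → V → Prop)
    (hconn : DConnected E) (hat : ArcTransitive E)
    (φ : V → ℤ) (hsurj : Function.Surjective φ)
    (hhom : ∀ u v : V, E u v → φ v = φ u + 1)
    (p q : ℕ) (hp : p.Prime) (hq : q.Prime)
    (hout : ∀ v : V, (outSet E v).ncard = p)
    (hin : ∀ v : V, (inSet E v).ncard = q)
    (hnt : ∃ g : Equiv.Perm V, g ∈ autGroup E ∧ (∀ x : V, φ x = 0 → g x = x) ∧ g ≠ 1) :
    HighlyArcTransitive E := by
  classical
  obtain ⟨g, hgmem, hgfix, hgne⟩ := hnt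
  have hout_ne : ∀ v : V, (outSet E v).Nonempty := fun v =>
    Set.nonempty_of_ncard_ne_zero (by rw [hout v]; exact hp.pos.ne')
  have hin_ne : ∀ v : V, (inSet E v).Nonempty := fun v =>
    Set.nonempty_of_ncard_ne_zero (by rw [hin v]; exact hq.pos.ne')
  obtain ⟨x₀, hx₀⟩ := hsurj 0
  -- g preserves levels
  have hglev : ∀ x, φ (g x) = φ x := by
    intro x
    have := shift_eq E hconn φ hhom hgmem x x₀
    rw [hgfix x₀ hx₀, hx₀] at this
    omega
  have hglev' : ∀ x, φ (g⁻¹ x) = φ x := by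
    intro x
    have := hglev (g⁻¹ x)
    rw [Equiv.Perm.apply_inv_self] at this
    omega
  -- cut-and-paste: the upper part of g
  set h : Equiv.Perm V :=
    { toFun := fun x => if 1 ≤ φ x then g x else x
      invFun := fun x => if 1 ≤ φ x then g⁻¹ x else x
      left_inv := by
        intro x
        by_cases hx : 1 ≤ φ x
        · simp only [if_pos hx, if_pos (show 1 ≤ φ (g x) by rw [hglev]; exact hx),
            Equiv.Perm.inv_apply_self]
        · simp only [if_neg hx]
      right_inv := by
        intro x
        by_cases hx : 1 ≤ φ x
        · simp only [if_pos hx, if_pos (show 1 ≤ φ (g⁻¹ x) by rw [hglev']; exact hx),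
            Equiv.Perm.apply_inv_self]
        · simp only [if_neg hx] } with hhdef
  have happly : ∀ x, h x = if 1 ≤ φ x then g x else x := fun x => rfl
  have hlow : ∀ x, φ x ≤ 0 → h x = x := by
    intro x hx
    rw [happly, if_neg (by omega)]
  have hhigh : ∀ x, 1 ≤ φ x → h x = g x := by
    intro x hx
    rw [happly, if_pos hx]
  have hmemh : h ∈ autGroup E := by
    rw [mem_autGroup]
    intro u v
    constructor
    · intro huv
      have hlvl : φ v = φ u + 1 := hhom _ _ huv
      by_cases hu : 1 ≤ φ u
      · rw [hhigh u hu, hhigh v (by omega)]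
        exact (mem_autGroup.mp hgmem u v).mp huv
      · rw [hlow u (by omega)]
        by_cases hv : 1 ≤ φ v
        · have hu0 : φ u = 0 := by omega
          rw [hhigh v hv]
          have := (mem_autGroup.mp hgmem u v).mp huv
          rwa [hgfix u hu0] at this
        · rw [hlow v (by omega)]
          exact huv
    · intro huv
      have hulvl : φ (h u) = φ u := by
        rw [happly]
        by_cases hu : 1 ≤ φ u
        · rw [if_pos hu, hglev]
        · rw [if_neg hu]
      have hvlvl : φ (h v) = φ v := by
        rw [happly]
        by_cases hv : 1 ≤ φ v
        · rw [if_pos hv, hglev]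
        · rw [if_neg hv]
      have hlvl : φ v = φ u + 1 := by
        have := hhom _ _ huv
        omega
      by_cases hu : 1 ≤ φ u
      · rw [hhigh u hu, hhigh v (by omega)] at huv
        exact (mem_autGroup.mp hgmem u v).mpr huv
      · rw [hlow u (by omega)] at huv
        by_cases hv : 1 ≤ φ v
        · have hu0 : φ u = 0 := by omega
          rw [hhigh v hv] at huv
          have : E (g u) (g v) := by rwa [hgfix u hu0]
          exact (mem_autGroup.mp hgmem u v).mpr this
        · rwa [hlow v (by omega)] at huv
  by_cases hcase : h = 1
  · -- then g is supported on the lower half; work with the reversed digraph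
    have hgup : ∀ x, 0 ≤ φ x → g x = x := by
      intro x hx
      rcases eq_or_lt_of_le hx with heq | hlt
      · exact hgfix x heq.symm
      · have : h x = x := by rw [hcase]; rfl
        rwa [hhigh x (by omega)] at this
    set E' : V → V → Prop := fun u v => E v u with hE'
    have hconn' : DConnected E' := by
      intro u v
      exact Relation.ReflTransGen.mono (fun a b hab => hab.symm) u v (hconn u v)
    have hat' : ArcTransitive E' := by
      intro u v x y huv hxy
      obtain ⟨a, ha, h1, h2⟩ := hat v u y x huv hxy
      rw [← autGroup_flip E] at ha
      exact ⟨a, ha, h2, h1⟩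
    have hhom' : ∀ u v : V, E' u v → (-φ v) = (-φ u) + 1 := by
      intro u v huv
      have := hhom v u huv
      omega
    have hout' : ∀ v : V, (outSet E' v).ncard = q := fun v => hin v
    have hin_ne' : ∀ v : V, (inSet E' v).Nonempty := fun v => hout_ne v
    have hgmem' : g ∈ autGroup E' := by rw [autGroup_flip]; exact hgmem
    have hgfix' : ∀ x, (fun x => -φ x) x ≤ 0 → g x = x := by
      intro x hx
      exact hgup x (by simpa using hx)
    exact HAT_flip E (half_fix_HAT E' hconn' hat' (fun x => -φ x) hhom' q hq hout'
      hin_ne' g hgmem' hgfix' hgne)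
  · exact half_fix_HAT E hconn hat φ hhom p hp hout hin_ne h hmemh hlow hcase
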